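/- Let N = {1,…,n} be a set of players with integer weights satisfying 1 ≤ w_ℓ for all ℓ, let q ≥ 1 be a quota, and let p ∈ N satisfy w_p ≤ q − 1. Then #{S ⊆ N : w(S) ≥ q and w(S \ {p}) < q} = [X^{q−1}] (f_p · (1 − X)^{−1}) − [X^{q−w_p−1}] (f_p · (1 − X)^{−1}), where the products and the inverse of 1 − X are taken in the formal power series ring and [X^j] denotes the j-th coefficient. -/

import Mathlib

/-- with integer weights `w_ℓ ≥ 1`, quota `q ≥ 1`, and a player `p` with
`w_p ≤ q − 1`, the Banzhaf numerator `#{S ⊆ N : w(S) ≥ q and w(S \ {p}) < q}` equals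
`[X^{q−1}] (f_p · (1 − X)⁻¹) − [X^{q−w_p−1}] (f_p · (1 − X)⁻¹)`, where
`f_p = ∏_{ℓ ∈ N \ {p}} (1 + X^{w_ℓ})` is viewed as a formal power series and
`(1 − X)⁻¹ = Σ_{i≥0} X^i`. -/
theorem banzhaf_via_geometric_series (n q : ℕ) (hq : 1 ≤ q) (w : Fin n → ℕ)
    (hw : ∀ ℓ, 1 ≤ w ℓ) (p : Fin n) (hp : w p ≤ q - 1) :
    (((Finset.univ : Finset (Finset (Fin n))).filter
        (fun S => q ≤ ∑ ℓ ∈ S, w ℓ ∧ ∑ ℓ ∈ S.erase p, w ℓ < q)).card : ℝ) =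
      PowerSeries.coeff (q - 1)
        ((∏ ℓ ∈ Finset.univ.erase p, (1 + PowerSeries.X ^ (w ℓ) : PowerSeries ℝ)) *
          PowerSeries.mk (fun _ => (1 : ℝ))) -
      PowerSeries.coeff (q - w p - 1)
        ((∏ ℓ ∈ Finset.univ.erase p, (1 + PowerSeries.X ^ (w ℓ) : PowerSeries ℝ)) *
          PowerSeries.mk (fun _ => (1 : ℝ))) := by
  classical
  set s : Finset (Fin n) := Finset.univ.erase p with hs
  -- Expand the product as a sum over subsets
  have hprod : (∏ ℓ ∈ s, (1 + PowerSeries.X ^ (w ℓ) : PowerSeries ℝ)) =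
      ∑ T ∈ s.powerset, PowerSeries.X ^ (∑ ℓ ∈ T, w ℓ) := by
    have h1 : ∀ ℓ ∈ s, (1 + PowerSeries.X ^ (w ℓ) : PowerSeries ℝ)
        = PowerSeries.X ^ (w ℓ) + 1 := fun _ _ => add_comm _ _
    rw [Finset.prod_congr rfl h1, Finset.prod_add]
    refine Finset.sum_congr rfl fun T hT => ?_
    rw [Finset.prod_pow_eq_pow_sum, Finset.prod_const_one, mul_one]
  have hcoeff : ∀ d : ℕ,
      PowerSeries.coeff d ((∏ ℓ ∈ s, (1 + PowerSeries.X ^ (w ℓ) : PowerSeries ℝ)) *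
        PowerSeries.mk (fun _ => (1:ℝ))) =
      ∑ T ∈ s.powerset, (if ∑ ℓ ∈ T, w ℓ ≤ d then (1:ℝ) else 0) := by
    intro d
    rw [hprod, Finset.sum_mul, map_sum]
    refine Finset.sum_congr rfl fun T hT => ?_
    rw [mul_comm, PowerSeries.coeff_mul_X_pow']
    split_ifs <;> simp [PowerSeries.coeff_mk]
  rw [hcoeff, hcoeff, ← Finset.sum_sub_distrib]
  -- Each term of the difference is an indicator
  have hterm : ∀ T ∈ s.powerset,
      ((if ∑ ℓ ∈ T, w ℓ ≤ q - 1 then (1:ℝ) else 0) -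
        (if ∑ ℓ ∈ T, w ℓ ≤ q - w p - 1 then (1:ℝ) else 0)) =
      (if q - w p - 1 < ∑ ℓ ∈ T, w ℓ ∧ ∑ ℓ ∈ T, w ℓ ≤ q - 1 then (1:ℝ) else 0) := by
    intro T hT
    split_ifs <;> norm_num <;> omega
  rw [Finset.sum_congr rfl hterm, Finset.sum_boole]
  -- Now a counting bijection
  congr 1
  refine Finset.card_bij (fun S _ => S.erase p) ?_ ?_ ?_
  · intro S hS
    simp only [Finset.mem_filter, Finset.mem_univ, true_and] at hS
    obtain ⟨h1, h2⟩ := hS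
    have hpS : p ∈ S := by
      by_contra hpn
      rw [Finset.erase_eq_of_notMem hpn] at h2
      omega
    have hsum : ∑ ℓ ∈ S.erase p, w ℓ + w p = ∑ ℓ ∈ S, w ℓ :=
      Finset.sum_erase_add _ _ hpS
    simp only [Finset.mem_filter, Finset.mem_powerset]
    refine ⟨fun x hx => ?_, by omega, by omega⟩
    simp only [hs, Finset.mem_erase, Finset.mem_univ, and_true]
    exact (Finset.mem_erase.mp hx).1
  · intro S1 hS1 S2 hS2 he
    simp only [Finset.mem_filter, Finset.mem_univ, true_and] at hS1 hS2
    have hp1 : p ∈ S1 := by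
      by_contra hpn
      rw [Finset.erase_eq_of_notMem hpn] at hS1
      omega
    have hp2 : p ∈ S2 := by
      by_contra hpn
      rw [Finset.erase_eq_of_notMem hpn] at hS2
      omega
    have he' : S1.erase p = S2.erase p := he
    rw [← Finset.insert_erase hp1, ← Finset.insert_erase hp2, he']
  · intro T hT
    simp only [Finset.mem_filter, Finset.mem_powerset] at hT
    obtain ⟨hTs, h1, h2⟩ := hT
    have hpT : p ∉ T := fun h => by
      have := hTs h
      simp [hs] at this
    refine ⟨insert p T, ?_, ?_⟩
    · simp only [Finset.mem_filter, Finset.mem_univ, true_and]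
      rw [Finset.sum_insert hpT, Finset.erase_insert hpT]
      omega
    · simpa using Finset.erase_insert hpT
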